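/- Let G = (V,E) be a finite simple graph that is (ℓ, 1/2 − ε)-sparse for a positive integer ℓ and a real ε > 0. Let U ⊆ V be a closed set of size at most ℓ and let χ be a proper 4-colouring of the induced subgraph G[U]. Then for every set W with U ⊆ W ⊆ V and |W| ≤ ℓ, the colouring χ extends to a proper 4-colouring of G[W]. -/

import Mathlib

/-- The set of edges of `G` with both endpoints in `U`. -/
def EdgesWithin {V : Type*} (G : SimpleGraph V) (U : Set V) : Set (Sym2 V) :=
  {e ∈ G.edgeSet | ∀ v ∈ e, v ∈ U}

/-- A graph is `(ℓ, ε)`-sparse if every vertex set `U` of size at most `ℓ`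
spans at most `(1+ε)|U|` edges. -/
def Sparse {V : Type*} (G : SimpleGraph V) (ℓ : ℕ) (ε : ℝ) : Prop :=
  ∀ U : Set V, U.ncard ≤ ℓ → ((EdgesWithin G U).ncard : ℝ) ≤ (1 + ε) * U.ncard

/-- `U` is closed if every vertex outside `U` has at most one neighbour in `U`. -/
def ClosedSimple {V : Type*} (G : SimpleGraph V) (U : Set V) : Prop :=
  ∀ v ∉ U, ({u ∈ U | G.Adj v u}).ncard ≤ 1

lemma exists_small_deg {V : Type*} [Fintype V] (G : SimpleGraph V) (S : Set V)
    (hE : 2 * ((EdgesWithin G S).ncard) < 3 * S.ncard) :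
    ∃ v ∈ S, ({u ∈ S | G.Adj v u}).ncard ≤ 2 := by
  classical
  set G' : SimpleGraph S := G.induce S with hG'
  haveI : DecidableRel G'.Adj := Classical.decRel _
  -- edge count comparison
  have hinj : Function.Injective (Sym2.map ((↑) : S → V)) :=
    Sym2.map.injective Subtype.val_injective
  have hsub : Sym2.map ((↑) : S → V) '' G'.edgeSet ⊆ EdgesWithin G S := by
    rintro e ⟨e', he', rfl⟩
    induction e' with
    | _ a b =>
      refine ⟨he', ?_⟩
      intro v hv
      rw [Sym2.map_pair_eq, Sym2.mem_iff] at hv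
      rcases hv with rfl | rfl
      exacts [a.2, b.2]
  have hedge : G'.edgeFinset.card ≤ (EdgesWithin G S).ncard := by
    have h1 : (G'.edgeSet).ncard = G'.edgeFinset.card := by
      rw [← SimpleGraph.coe_edgeFinset, Set.ncard_coe_finset]
    calc G'.edgeFinset.card = (Sym2.map ((↑) : S → V) '' G'.edgeSet).ncard := by
          rw [Set.ncard_image_of_injective _ hinj, h1]
      _ ≤ (EdgesWithin G S).ncard := Set.ncard_le_ncard hsub (Set.toFinite _)
  -- degrees
  have hdeg : ∀ v : S, G'.degree v = ({u ∈ S | G.Adj ↑v u}).ncard := by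
    intro v
    have himg : Subtype.val '' (G'.neighborSet v) = {u ∈ S | G.Adj ↑v u} := by
      ext u
      constructor
      · rintro ⟨u', hu', rfl⟩
        exact ⟨u'.2, hu'⟩
      · rintro ⟨hu, hadj⟩
        exact ⟨⟨u, hu⟩, hadj, rfl⟩
    rw [← himg, Set.ncard_image_of_injective _ Subtype.val_injective,
      SimpleGraph.degree, SimpleGraph.neighborFinset_def, ← Set.ncard_eq_toFinset_card']
  -- now conclude
  by_contra hcon
  push_neg at hcon
  have hdeg3 : ∀ v : S, 3 ≤ G'.degree v := by
    intro v
    rw [hdeg v]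
    exact hcon ↑v v.2
  have hsum : 3 * S.ncard ≤ ∑ v : S, G'.degree v := by
    have : S.ncard = Fintype.card S := by
      rw [← Nat.card_coe_set_eq, Nat.card_eq_fintype_card]
    rw [this]
    calc 3 * Fintype.card S = ∑ _v : S, 3 := by
          rw [Finset.sum_const, Finset.card_univ, smul_eq_mul, mul_comm]
      _ ≤ ∑ v : S, G'.degree v := Finset.sum_le_sum fun v _ => hdeg3 v
  rw [SimpleGraph.sum_degrees_eq_twice_card_edges] at hsum
  omega

theorem stmt_6_aux {V : Type*} [Fintype V] (G : SimpleGraph V) (ℓ : ℕ) (ε : ℝ)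
    (hℓ : 0 < ℓ) (hε : 0 < ε) (hsp : ∀ U : Set V, U.ncard ≤ ℓ → ((EdgesWithin G U).ncard : ℝ) ≤ (1 + (1/2 - ε)) * U.ncard)
    (U : Set V) (hUcl : ∀ v ∉ U, ({u ∈ U | G.Adj v u}).ncard ≤ 1) (hUcard : U.ncard ≤ ℓ)
    (χ : V → Fin 4) (hχ : ∀ u ∈ U, ∀ v ∈ U, G.Adj u v → χ u ≠ χ v)
    (W : Set V) (hUW : U ⊆ W) (hW : W.ncard ≤ ℓ) :
    ∃ χ' : V → Fin 4, (∀ u ∈ U, χ' u = χ u) ∧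
      ∀ u ∈ W, ∀ v ∈ W, G.Adj u v → χ' u ≠ χ' v := by
  classical
  obtain ⟨n, hn⟩ : ∃ n, (W \ U).ncard = n := ⟨_, rfl⟩
  induction n using Nat.strong_induction_on generalizing W with
  | _ n ih =>
  rcases Set.eq_empty_or_nonempty (W \ U) with h0 | hS
  · have hWU : W ⊆ U := Set.diff_eq_empty.mp h0
    exact ⟨χ, fun u _ => rfl, fun u hu v hv hadj => hχ u (hWU hu) v (hWU hv) hadj⟩
  · set S := W \ U with hSdef
    have hScard : S.ncard ≤ ℓ := le_trans (Set.ncard_le_ncard Set.diff_subset (Set.toFinite _)) hW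
    have hSpos : 0 < S.ncard := (Set.ncard_pos (Set.toFinite _)).mpr hS
    have hEreal := hsp S hScard
    have hE : 2 * ((EdgesWithin G S).ncard) < 3 * S.ncard := by
      have h1 : (0 : ℝ) < S.ncard := by exact_mod_cast hSpos
      have : (2 * ((EdgesWithin G S).ncard) : ℝ) < 3 * S.ncard := by nlinarith
      exact_mod_cast this
    obtain ⟨v, hvS, hvdeg⟩ := exists_small_deg G S hE
    have hvW : v ∈ W := hvS.1
    have hvU : v ∉ U := hvS.2
    have hN : ({u ∈ W | G.Adj v u}).ncard ≤ 3 := by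
      have hsub : {u ∈ W | G.Adj v u} ⊆ {u ∈ S | G.Adj v u} ∪ {u ∈ U | G.Adj v u} := by
        rintro u ⟨huW, hadj⟩
        by_cases huU : u ∈ U
        · exact Or.inr ⟨huU, hadj⟩
        · exact Or.inl ⟨⟨huW, huU⟩, hadj⟩
      calc ({u ∈ W | G.Adj v u}).ncard
          ≤ ({u ∈ S | G.Adj v u} ∪ {u ∈ U | G.Adj v u}).ncard :=
            Set.ncard_le_ncard hsub (Set.toFinite _)
        _ ≤ ({u ∈ S | G.Adj v u}).ncard + ({u ∈ U | G.Adj v u}).ncard :=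
            Set.ncard_union_le _ _
        _ ≤ 2 + 1 := add_le_add hvdeg (hUcl v hvU)
    set W' := W \ {v} with hW'def
    have hUW' : U ⊆ W' := fun u hu => ⟨hUW hu, by rintro rfl; exact hvU hu⟩
    have hW' : W'.ncard ≤ ℓ := le_trans (Set.ncard_le_ncard Set.diff_subset (Set.toFinite _)) hW
    have hdiff : W' \ U = S \ {v} := by
      rw [hW'def, hSdef]
      ext u; constructor
      · rintro ⟨⟨huW, huv⟩, huU⟩; exact ⟨⟨huW, huU⟩, huv⟩
      · rintro ⟨⟨huW, huU⟩, huv⟩; exact ⟨⟨huW, huv⟩, huU⟩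
    have hlt : (W' \ U).ncard < n := by
      rw [hdiff, Set.ncard_diff_singleton_of_mem hvS, ← hn]
      omega
    obtain ⟨χ', hagree, hproper⟩ := ih _ hlt W' hUW' hW' rfl
    have himg : (χ' '' {u ∈ W | G.Adj v u}).ncard ≤ 3 :=
      le_trans (Set.ncard_image_le (Set.toFinite _)) hN
    have hne : χ' '' {u ∈ W | G.Adj v u} ≠ Set.univ := by
      intro h
      rw [h, Set.ncard_univ, Nat.card_eq_fintype_card, Fintype.card_fin] at himg
      omega
    obtain ⟨c, hc⟩ := Set.ne_univ_iff_exists_notMem _ |>.mp hne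
    refine ⟨Function.update χ' v c, ?_, ?_⟩
    · intro u hu
      rw [Function.update_of_ne (by rintro rfl; exact hvU hu)]
      exact hagree u hu
    · intro u hu w hw hadj
      by_cases huv : u = v
      · by_cases hwv : w = v
        · rw [huv, hwv] at hadj; exact absurd hadj (G.loopless.irrefl _)
        · rw [huv, Function.update_self, Function.update_of_ne hwv]
          intro h
          exact hc ⟨w, ⟨hw, by rwa [huv] at hadj⟩, h.symm⟩
      · by_cases hwv : w = v
        · rw [hwv, Function.update_self, Function.update_of_ne huv]
          intro h
          exact hc ⟨u, ⟨hu, (by rwa [hwv] at hadj : G.Adj u v).symm⟩, h⟩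
        · rw [Function.update_of_ne huv, Function.update_of_ne hwv]
          exact hproper u ⟨hu, huv⟩ w ⟨hw, hwv⟩ hadj

/-- in an `(ℓ, 1/2 - ε)`-sparse graph, a proper `4`-colouring of a
closed set `U` of size at most `ℓ` extends to a proper `4`-colouring of any set
`W ⊇ U` of size at most `ℓ`. -/
theorem stmt_6 {V : Type*} [Fintype V] (G : SimpleGraph V) (ℓ : ℕ) (ε : ℝ)
    (hℓ : 0 < ℓ) (hε : 0 < ε) (hsp : Sparse G ℓ (1 / 2 - ε))
    (U : Set V) (hUcl : ClosedSimple G U) (hUcard : U.ncard ≤ ℓ)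
    (χ : V → Fin 4) (hχ : ∀ u ∈ U, ∀ v ∈ U, G.Adj u v → χ u ≠ χ v)
    (W : Set V) (hUW : U ⊆ W) (hW : W.ncard ≤ ℓ) :
    ∃ χ' : V → Fin 4, (∀ u ∈ U, χ' u = χ u) ∧
      ∀ u ∈ W, ∀ v ∈ W, G.Adj u v → χ' u ≠ χ' v := by
  exact stmt_6_aux G ℓ ε hℓ hε hsp U hUcl hUcard χ hχ W hUW hW
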